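/- Let σ : I → ℝ be twice differentiable, satisfy 4·σ''(t) = σ(t)·(3σ(t)² + 2t)·(σ(t)² + 2t) on the open interval I ∋ a, with σ < 0 on I ∩ (−∞, a), σ(a) = 0, and σ > 0 on I ∩ (a, ∞). Then s := σ² satisfies the Painlevé IV equation on I, in the sense that 2·s·s'' − (s')² = s²·(3s + 2t)·(s + 2t) on I and the ratio (s')²/(2s) extends continuously across a with limit 2·σ'(a)², so that s''(a) = lim_{t→a} [(s')²/(2s)](t) + (1/2)s(a)(3s(a)+2a)(s(a)+2a). -/

import Mathlib

theorem stmt_11 (I : Set ℝ) (hI : IsOpen I) (hI' : IsPreconnected I) (σ : ℝ → ℝ) (a : ℝ)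
    (ha : a ∈ I)
    (hσ1 : ∀ t ∈ I, DifferentiableAt ℝ σ t)
    (hσ2 : ∀ t ∈ I, DifferentiableAt ℝ (deriv σ) t)
    (heq : ∀ t ∈ I, 4 * deriv (deriv σ) t
      = σ t * (3 * (σ t) ^ 2 + 2 * t) * ((σ t) ^ 2 + 2 * t))
    (hneg : ∀ t ∈ I, t < a → σ t < 0) (h0 : σ a = 0)
    (hpos : ∀ t ∈ I, a < t → 0 < σ t) :
    (∀ t ∈ I, 2 * (σ t) ^ 2 * deriv (deriv (fun v => (σ v) ^ 2)) t
        - (deriv (fun v => (σ v) ^ 2) t) ^ 2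
      = ((σ t) ^ 2) ^ 2 * (3 * (σ t) ^ 2 + 2 * t) * ((σ t) ^ 2 + 2 * t)) ∧
    Filter.Tendsto (fun u => (deriv (fun v => (σ v) ^ 2) u) ^ 2 / (2 * (σ u) ^ 2))
      (nhdsWithin a (I \ {a})) (nhds (2 * (deriv σ a) ^ 2)) ∧
    deriv (deriv (fun v => (σ v) ^ 2)) a
      = 2 * (deriv σ a) ^ 2
        + (1 / 2) * (σ a) ^ 2 * (3 * (σ a) ^ 2 + 2 * a) * ((σ a) ^ 2 + 2 * a) := by
  have hd1 : ∀ t ∈ I, deriv (fun v => (σ v) ^ 2) t = 2 * σ t * deriv σ t := by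
    intro t ht
    have h := ((hσ1 t ht).hasDerivAt.pow 2).deriv
    change deriv (σ ^ 2) t = _
    rw [h]; simp
  have hd2 : ∀ t ∈ I, deriv (deriv (fun v => (σ v) ^ 2)) t
      = 2 * (deriv σ t) ^ 2 + 2 * σ t * deriv (deriv σ) t := by
    intro t ht
    have hev : deriv (fun v => (σ v) ^ 2) =ᶠ[nhds t] fun v => 2 * σ v * deriv σ v := by
      filter_upwards [hI.mem_nhds ht] with u hu using hd1 u hu
    rw [hev.deriv_eq]
    have h : HasDerivAt (fun v => 2 * σ v * deriv σ v)
        (2 * deriv σ t * deriv σ t + 2 * σ t * deriv (deriv σ) t) t := by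
      have := (((hσ1 t ht).hasDerivAt.const_mul 2).mul (hσ2 t ht).hasDerivAt)
      exact this
    rw [h.deriv]; ring
  refine ⟨?_, ?_, ?_⟩
  · intro t ht
    rw [hd1 t ht, hd2 t ht]
    linear_combination (σ t) ^ 3 * heq t ht
  · have hcont : Filter.Tendsto (fun u => 2 * (deriv σ u) ^ 2)
        (nhdsWithin a (I \ {a})) (nhds (2 * (deriv σ a) ^ 2)) := by
      exact ((continuousAt_const.mul ((hσ2 a ha).continuousAt.pow 2)).tendsto).mono_left
        nhdsWithin_le_nhds
    refine hcont.congr' ?_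
    filter_upwards [self_mem_nhdsWithin] with u hu
    obtain ⟨huI, hua⟩ := hu
    have hσu : σ u ≠ 0 := by
      rcases lt_trichotomy u a with h | h | h
      · exact (hneg u huI h).ne
      · exact absurd h (by simpa using hua)
      · exact (hpos u huI h).ne'
    rw [hd1 u huI]
    field_simp
  · rw [hd2 a ha, h0]
    ring
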